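/- Let $F$ be a properly colored fixed-end-vertex walk in a loopless edge-colored multigraph $G$ whose first and last vertices both equal $u$, with first edge of color $i$ and last edge of color $j$. Let $G'$ be obtained from $G$ by duplicating every edge of $F$ (with multiplicity equal to the number of traversals). Then for every color $c$: if $c \notin \{i,j\}$ then $d'(u) - 2 d'_c(u) \ge d(u) - 2 d_c(u) + 2$; if $c \in \{i,j\}$ and $i \ne j$ then $d'(u) - 2 d'_c(u) \ge d(u) - 2 d_c(u)$; and if $i = j = c$ then $d'(u) - 2 d'_c(u) \ge d(u) - 2 d_c(u) - 2$. -/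

import Mathlib

/-- An edge-colored multigraph: edges indexed by a type `E`, each with an unordered pair
of end-vertices and a color (a natural number). -/
structure ECM (V : Type) (E : Type) where
  ends : E → Sym2 V
  color : E → ℕ

namespace ECM

/-- A walk from `u` to `v`: a sequence of edges, each consistent with the vertex sequence. -/
inductive Walk {V E : Type} (G : ECM V E) : V → V → Type
  | nil (v : V) : Walk G v v
  | cons {u v w : V} (e : E) (h : G.ends e = s(u, v)) (p : Walk G v w) : Walk G u w

/-- The list of edges of a walk, in order. -/
def Walk.edges {V E : Type} {G : ECM V E} : {u v : V} → G.Walk u v → List E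
  | _, _, .nil _ => []
  | _, _, .cons e _ p => e :: p.edges

/-- A fixed-end-vertex walk is properly colored (PC) if consecutive edges have distinct
colors (no condition between the last and first edges, even if the walk is closed). -/
def Walk.IsPC {V E : Type} {G : ECM V E} {u v : V} (p : G.Walk u v) : Prop :=
  List.Chain' (· ≠ ·) (p.edges.map G.color)

/-- Concatenation of walks. -/
def Walk.append {V E : Type} {G : ECM V E} :
    {u v w : V} → G.Walk u v → G.Walk v w → G.Walk u w
  | _, _, _, .nil _, q => q
  | _, _, _, .cons e h p, q => .cons e h (p.append q)

/-- The degree of a vertex: the number of edges incident with it. -/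
noncomputable def deg {V E : Type} (G : ECM V E) (u : V) : ℕ := {e : E | u ∈ G.ends e}.ncard

/-- The color-`i` degree of a vertex: the number of edges of color `i` incident with it. -/
noncomputable def degC {V E : Type} (G : ECM V E) (u : V) (i : ℕ) : ℕ :=
  {e : E | u ∈ G.ends e ∧ G.color e = i}.ncard

/-- `G` is connected: any two vertices are joined by a walk. -/
def Connected {V E : Type} (G : ECM V E) : Prop := ∀ x y : V, Nonempty (G.Walk x y)

/-- A closed walk is properly colored cyclically: it has at least one edge, consecutive
edges have distinct colors, and the last edge's color differs from the first edge's color. -/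
def Walk.IsPCClosed {V E : Type} {G : ECM V E} {u : V} (p : G.Walk u u) : Prop :=
  p.edges ≠ [] ∧ List.Chain' (· ≠ ·) (p.edges.map G.color) ∧
    ∀ a ∈ (p.edges.map G.color).getLast?, ∀ b ∈ (p.edges.map G.color).head?, a ≠ b

/-- A closed walk is an Euler trail if it traverses every edge exactly once. -/
def Walk.IsEuler {V E : Type} {G : ECM V E} {u : V} (p : G.Walk u u) : Prop :=
  p.edges.Nodup ∧ ∀ e : E, e ∈ p.edges

/-- The multigraph obtained from `G` by duplicating every edge along the walk `p`
(one new parallel copy per traversal). -/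
def dup {V E : Type} (G : ECM V E) {a b : V} (p : G.Walk a b) :
    ECM V (E ⊕ Fin p.edges.length) where
  ends := Sum.elim G.ends fun i => G.ends (p.edges.get i)
  color := Sum.elim G.color fun i => G.color (p.edges.get i)

end ECM

open Classical in
lemma key_walk {V E : Type} (G : ECM V E) (hloop : ∀ e : E, ¬ (G.ends e).IsDiag)
    (u : V) (c : ℕ) :
    ∀ {a b : V} (p : G.Walk a b), p.IsPC → ∀ e₀ e₁ : E, p.edges.head? = some e₀ →
      p.edges.getLast? = some e₁ →
      (if a = u then 1 - 2 * (if G.color e₀ = c then (1:ℤ) else 0) else 0)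
      + (if b = u then 1 - 2 * (if G.color e₁ = c then (1:ℤ) else 0) else 0)
      ≤ (p.edges.countP (fun e => @decide (u ∈ G.ends e) (Classical.propDecidable _)) : ℤ)
        - 2 * (p.edges.countP (fun e => @decide (u ∈ G.ends e ∧ G.color e = c)
            (Classical.propDecidable _)) : ℤ) := by
  intro a b p
  induction p with
  | nil v => intro _ e₀ e₁ h0; simp [ECM.Walk.edges] at h0
  | cons e h q ih =>
    rename_i a v b
    intro hpc e₀ e₁ h0 h1
    have hav : a ≠ v := by
      intro hav; exact hloop e (by rw [h, hav]; exact Sym2.mk_isDiag_iff.mpr rfl)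
    have hmem : u ∈ G.ends e ↔ (u = a ∨ u = v) := by rw [h]; simp [Sym2.mem_iff]
    have he0 : e = e₀ := by simpa [ECM.Walk.edges] using h0
    subst he0
    cases q with
    | nil w =>
      -- edges = [e₀], b = v
      have he1 : e = e₁ := by simpa [ECM.Walk.edges] using h1
      subst he1
      simp only [ECM.Walk.edges, List.countP_cons, List.countP_nil]
      by_cases ha : a = u <;> by_cases hb : v = u
      · exact absurd (ha.trans hb.symm) hav
      all_goals
        simp only [if_pos, if_neg, ha, hb, decide_eq_true_eq] <;>
        first
          | (have hu : u ∈ G.ends e := hmem.mpr (by tauto)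
             split_ifs <;> simp_all <;> omega)
          | (have hu : ¬ u ∈ G.ends e := by rw [hmem]; push_neg; exact ⟨fun h' => ha h'.symm, fun h' => hb h'.symm⟩
             split_ifs <;> simp_all <;> omega)
    | cons e' h' q' =>
      have hne : (ECM.Walk.cons e' h' q').edges ≠ [] := by simp [ECM.Walk.edges]
      have hh' : (ECM.Walk.cons e' h' q').edges.head? = some e' := by simp [ECM.Walk.edges]
      have hl' : (ECM.Walk.cons e' h' q').edges.getLast? = some e₁ := by
        rw [show (ECM.Walk.cons e (h := h) (ECM.Walk.cons e' h' q')).edges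
            = e :: e' :: q'.edges from rfl] at h1
        rwa [List.getLast?_cons_cons] at h1
      have hcol : G.color e ≠ G.color e' := by
        have := hpc
        unfold ECM.Walk.IsPC at this
        rw [show (ECM.Walk.cons e (h := h) (ECM.Walk.cons e' h' q')).edges
            = e :: e' :: (ECM.Walk.cons e' h' q').edges.tail from rfl] at this
        simp only [List.map_cons, List.isChain_cons_cons] at this
        exact (List.isChain_cons_cons.mp this).1
      have hpc' : (ECM.Walk.cons e' h' q').IsPC := by
        have := hpc
        unfold ECM.Walk.IsPC at this ⊢
        rw [show (ECM.Walk.cons e (h := h) (ECM.Walk.cons e' h' q')).edges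
            = e :: (ECM.Walk.cons e' h' q').edges from rfl] at this
        rw [List.map_cons] at this
        exact this.tail
      have IH := ih hpc' e' e₁ hh' hl'
      rw [show (ECM.Walk.cons e (h := h) (ECM.Walk.cons e' h' q')).edges
          = e :: (ECM.Walk.cons e' h' q').edges from rfl]
      rw [List.countP_cons, List.countP_cons]
      push_cast
      have step : (if a = u then 1 - 2 * (if G.color e = c then (1:ℤ) else 0) else 0)
          ≤ ((if @decide (u ∈ G.ends e) (Classical.propDecidable _) = true then (1:ℤ) else 0)
            - 2 * (if @decide (u ∈ G.ends e ∧ G.color e = c)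
                (Classical.propDecidable _) = true then (1:ℤ) else 0))
            + (if v = u then 1 - 2 * (if G.color e' = c then (1:ℤ) else 0) else 0) := by
        simp only [decide_eq_true_eq]
        by_cases ha : a = u <;> by_cases hv : v = u
        · exact absurd (ha.trans hv.symm) hav
        · have hu : u ∈ G.ends e := hmem.mpr (Or.inl ha.symm)
          simp only [if_pos ha, if_neg hv, if_pos hu]
          split_ifs with h1 h2 <;> simp_all <;> omega
        · have hu : u ∈ G.ends e := hmem.mpr (Or.inr hv.symm)
          simp only [if_neg ha, if_pos hv, if_pos hu]
          by_cases hc1 : G.color e = c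
          · have hc2 : G.color e' ≠ c := fun hh => hcol (hc1.trans hh.symm)
            simp [hc1, hc2, hu]
          · simp only [if_neg hc1, if_neg (by tauto : ¬(u ∈ G.ends e ∧ G.color e = c))]
            split_ifs <;> omega
        · have hu : ¬ u ∈ G.ends e := by
            rw [hmem]; push_neg; exact ⟨fun h'' => ha h''.symm, fun h'' => hv h''.symm⟩
          simp only [if_neg ha, if_neg hv, if_neg hu, if_neg (by tauto : ¬(u ∈ G.ends e ∧ G.color e = c))]
          norm_num
      linarith


open Classical in
lemma ncard_sum' {E F : Type} [Finite E] [Finite F] (P : E ⊕ F → Prop) :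
    {x : E ⊕ F | P x}.ncard = {e : E | P (.inl e)}.ncard + {k : F | P (.inr k)}.ncard := by
  have hset : {x : E ⊕ F | P x} = Sum.inl '' {e | P (.inl e)} ∪ Sum.inr '' {k | P (.inr k)} := by
    ext x; cases x <;> simp
  rw [hset, Set.ncard_union_eq ?_ (Set.toFinite _) (Set.toFinite _),
    Set.ncard_image_of_injective _ Sum.inl_injective,
    Set.ncard_image_of_injective _ Sum.inr_injective]
  exact Set.disjoint_left.mpr (by rintro _ ⟨e, _, rfl⟩ ⟨k, _, h⟩; simp at h)

open Classical in
lemma ncard_fin_list' {α : Type} (P : α → Prop) : ∀ (L : List α),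
    {k : Fin L.length | P (L.get k)}.ncard = L.countP (fun a => decide (P a))
  | [] => by
    have : {k : Fin ([] : List α).length | P ([].get k)} = ∅ := by
      ext k; exact absurd k.2 (by simp)
    rw [this, Set.ncard_empty]; simp
  | a :: L => by
    rw [List.countP_cons, ← ncard_fin_list' P L]
    have hset : {k : Fin (a :: L).length | P ((a :: L).get k)} =
        (Fin.succ '' {k : Fin L.length | P (L.get k)}) ∪ (if P a then {0} else ∅) := by
      ext k
      refine Fin.cases ?_ ?_ k
      · simp only [Set.mem_setOf_eq, List.get_cons_zero, Set.mem_union, Set.mem_image]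
        constructor
        · intro h; right; simp [if_pos h]
        · rintro (⟨m, hm, hh⟩ | hh)
          · exact absurd hh (Fin.succ_ne_zero m)
          · split_ifs at hh with h; · exact h
            · simp at hh
      · intro m
        simp only [Set.mem_setOf_eq, Set.mem_union, Set.mem_image]
        constructor
        · intro h; left; exact ⟨m, by simpa using h, rfl⟩
        · rintro (⟨m', hm', hh⟩ | hh)
          · cases Fin.succ_injective _ hh; simpa using hm'
          · split_ifs at hh with h
            · exact absurd hh (Fin.succ_ne_zero m)
            · simp at hh
    rw [hset, Set.ncard_union_eq ?_ (Set.toFinite _) (Set.toFinite _),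
      Set.ncard_image_of_injective _ (Fin.succ_injective _)]
    · simp only [decide_eq_true_eq]; split_ifs <;> simp
    · split_ifs <;> simp [Set.disjoint_left, Fin.succ_ne_zero]



/-- Duplicating every edge of a properly colored closed fixed-end-vertex walk `p` with
end-vertex `u`, first edge of color `i` and last edge of color `j`: for every color `c`,
the quantity `d(u) - 2 d_c(u)` increases by at least 2 if `c ∉ {i, j}`, is non-increasing...
more precisely does not decrease if `c ∈ {i, j}` with `i ≠ j`, and decreases by at most 2
if `i = j = c`. -/
theorem dup_closed_walk_endpoint {V E : Type} [Fintype E] (G : ECM V E)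
    (hloop : ∀ e : E, ¬ (G.ends e).IsDiag)
    {u : V} (p : G.Walk u u) (hpc : p.IsPC)
    {e₀ e₁ : E} (hhead : p.edges.head? = some e₀) (hlast : p.edges.getLast? = some e₁)
    {i j : ℕ} (hi : G.color e₀ = i) (hj : G.color e₁ = j) :
    ∀ c : ℕ,
      (c ≠ i ∧ c ≠ j →
        (G.deg u : ℤ) - 2 * G.degC u c + 2
          ≤ ((G.dup p).deg u : ℤ) - 2 * (G.dup p).degC u c) ∧
      ((c = i ∨ c = j) → i ≠ j →
        (G.deg u : ℤ) - 2 * G.degC u c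
          ≤ ((G.dup p).deg u : ℤ) - 2 * (G.dup p).degC u c) ∧
      (i = c → j = c →
        (G.deg u : ℤ) - 2 * G.degC u c - 2
          ≤ ((G.dup p).deg u : ℤ) - 2 * (G.dup p).degC u c) := by
  intro c
  have K := key_walk G hloop u c p hpc e₀ e₁ hhead hlast
  rw [if_pos rfl, if_pos rfl] at K
  set D : ℕ := p.edges.countP (fun e => @decide (u ∈ G.ends e) (Classical.propDecidable _)) with hDdef
  set Dc : ℕ := p.edges.countP (fun e => @decide (u ∈ G.ends e ∧ G.color e = c) (Classical.propDecidable _)) with hDcdef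
  have hdeg : (G.dup p).deg u = G.deg u + D := by
    unfold ECM.deg
    rw [ncard_sum' (fun x => u ∈ (G.dup p).ends x)]
    simp only [ECM.dup, Sum.elim_inl, Sum.elim_inr]
    congr 1
    exact ncard_fin_list' (fun e => u ∈ G.ends e) p.edges
  have hdegC : (G.dup p).degC u c = G.degC u c + Dc := by
    unfold ECM.degC
    rw [ncard_sum' (fun x => u ∈ (G.dup p).ends x ∧ (G.dup p).color x = c)]
    simp only [ECM.dup, Sum.elim_inl, Sum.elim_inr]
    congr 1
    exact ncard_fin_list' (fun e => u ∈ G.ends e ∧ G.color e = c) p.edges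
  rw [hdeg, hdegC]
  push_cast
  refine ⟨?_, ?_, ?_⟩
  · rintro ⟨hci, hcj⟩
    rw [if_neg (by rw [hi]; exact fun h => hci h.symm),
      if_neg (by rw [hj]; exact fun h => hcj h.symm)] at K
    linarith
  · intro hcij hij
    have : ¬ (G.color e₀ = c ∧ G.color e₁ = c) := by
      rintro ⟨h1, h2⟩; exact hij (hi ▸ hj ▸ h1.trans h2.symm)
    rcases Classical.em (G.color e₀ = c) with h1 | h1 <;>
      rcases Classical.em (G.color e₁ = c) with h2 | h2
    · exact absurd ⟨h1, h2⟩ this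
    · rw [if_pos h1, if_neg h2] at K; linarith
    · rw [if_neg h1, if_pos h2] at K; linarith
    · rw [if_neg h1, if_neg h2] at K; linarith
  · intro hic hjc
    rw [if_pos (hi.trans hic), if_pos (hj.trans hjc)] at K
    linarith
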